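/- Let μ > 0, L > μ, γ ∈ [0, 1 - μ/L), α = 1/L, r = √(αμ(1-γ)), c = (1-γ-r)/((1-γ)r), and β = (1-γ-r)²/((1-γ)(1-γ-r²)). Consider sequences in ℝ^d satisfying y^t = x^t + β m^t, x^{t+1} = y^t - α g^t, m^{t+1} = γ m^t + (1-γ)(x^{t+1} - x^t), and define v^t = x^t + c m^t. Then for every t, v^{t+1} = (1-r) v^t + r (y^t - (1/μ) g^t). -/

import Mathlib

/-- the auxiliary sequence `v^t = x^t + c m^t` of EMA-Nesterov (strongly
convex parameter choice) satisfies `v^{t+1} = (1-r) v^t + r (y^t - (1/μ) g^t)`. -/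
theorem ema_nesterov_v_recursion_strongly_convex
    (d : ℕ) (μ L γ α r c β : ℝ)
    (hμ : 0 < μ) (hL : μ < L) (hγ0 : 0 ≤ γ) (hγ1 : γ < 1 - μ / L)
    (hα : α = 1 / L)
    (hr : r = Real.sqrt (α * μ * (1 - γ)))
    (hc : c = (1 - γ - r) / ((1 - γ) * r))
    (hβ : β = (1 - γ - r) ^ 2 / ((1 - γ) * (1 - γ - r ^ 2)))
    (x m y g : ℕ → EuclideanSpace ℝ (Fin d))
    (hy : ∀ t, y t = x t + β • m t)
    (hx : ∀ t, x (t + 1) = y t - α • g t)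
    (hm : ∀ t, m (t + 1) = γ • m t + (1 - γ) • (x (t + 1) - x t)) :
    ∀ t, x (t + 1) + c • m (t + 1) =
      (1 - r) • (x t + c • m t) + r • (y t - (1 / μ) • g t) := by
  have hL0 : 0 < L := hμ.trans hL
  have hαμ : α * μ < 1 := by
    rw [hα]; rw [div_mul_eq_mul_div, one_mul, div_lt_one hL0]; exact hL
  have hα0 : 0 < α := by rw [hα]; positivity
  have h1γ : 0 < 1 - γ := by
    have : 0 < μ / L := by positivity
    linarith
  have hr2 : r ^ 2 = α * μ * (1 - γ) := by
    rw [hr, Real.sq_sqrt]; positivity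
  have hr0 : 0 < r := by
    rw [hr]; apply Real.sqrt_pos.mpr; positivity
  have hden : 1 - γ - r ^ 2 ≠ 0 := by
    have : r ^ 2 < 1 - γ := by
      rw [hr2]; nlinarith
    linarith
  intro t
  rw [hm t, hx t, hy t]
  have hμ' : μ ≠ 0 := ne_of_gt hμ
  have hr' : r ≠ 0 := ne_of_gt hr0
  have h1γ' : (1 : ℝ) - γ ≠ 0 := ne_of_gt h1γ
  match_scalars
  · ring
  · rw [hc, hβ]; field_simp; ring
  · rw [hc]; field_simp; linear_combination hr2
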